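/- Let H be an RKHS on Ω with kernel κ, f ∈ H a target, and P_{f̄} ∈ H an interpolant of a function f̄ (in Lagrange form P_{f̄}(y) = Σ_j f̄(x_j) φ_j(y) with cardinal functions φ_j ∈ H) whose RKHS norm equals f̄_X^T K^{-1} f̄_X where f̄_X = (f̄(x_1),...,f̄(x_n)) and K is the (invertible) Gram matrix. Then for all x ∈ Ω: |f(x) − P_f(x)| ≤ (‖f‖_H + ‖P_{f̄}‖_H) · ‖κ(·,x)‖_H + (max_j |f(x_j) − f̄(x_j)|) · Σ_j |φ_j(x)|, where P_f(y) = Σ_j f(x_j) φ_j(y). -/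
import Mathlib


open scoped RealInnerProductSpace
open Matrix

/-- Corollary combining the Cauchy–Schwarz/native-space bound
with the Lebesgue-function decomposition:
`|f(x) − P_f(x)| ≤ (‖f‖ + ‖P_f̄‖)‖κ(·,x)‖ + (max_j |f(x_j) − f̄(x_j)|) λ(x)`. -/
theorem rkhs_corollary_error_bound
    {Ω H : Type*} [NormedAddCommGroup H] [InnerProductSpace ℝ H]
    (ev : H → Ω → ℝ) (k : Ω → H)
    (hrep : ∀ (g : H) (x : Ω), ⟪g, k x⟫ = ev g x)
    {n : ℕ} (hn : 0 < n) (x : Fin n → Ω) (φ : Fin n → H)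
    (K : Matrix (Fin n) (Fin n) ℝ) (hK : K.PosDef) (hKinv : IsUnit K)
    (f Pfbar : H) (fbar : Ω → ℝ)
    (hPfbar : ∀ y : Ω, ev Pfbar y = ∑ j, fbar (x j) * ev (φ j) y)
    (hnorm : ‖Pfbar‖ ^ 2 =
      (fun j => fbar (x j)) ⬝ᵥ K⁻¹.mulVec (fun j => fbar (x j)))
    (pt : Ω) :
    |ev f pt - ∑ j, ev f (x j) * ev (φ j) pt| ≤
      (‖f‖ + ‖Pfbar‖) * ‖k pt‖ +
      (Finset.univ.sup' (Finset.univ_nonempty_iff.mpr ⟨⟨0, hn⟩⟩)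
        (fun j => |ev f (x j) - fbar (x j)|)) * ∑ j, |ev (φ j) pt| := by
  set M := Finset.univ.sup' (Finset.univ_nonempty_iff.mpr ⟨⟨0, hn⟩⟩)
      (fun j => |ev f (x j) - fbar (x j)|) with hM
  have hsplit : ev f pt - ∑ j, ev f (x j) * ev (φ j) pt
      = (ev f pt - ev Pfbar pt)
        + ∑ j, (fbar (x j) - ev f (x j)) * ev (φ j) pt := by
    rw [hPfbar pt]
    simp only [sub_mul, Finset.sum_sub_distrib]
    ring
  have h1 : |ev f pt - ev Pfbar pt| ≤ (‖f‖ + ‖Pfbar‖) * ‖k pt‖ := by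
    have : ev f pt - ev Pfbar pt = ⟪f - Pfbar, k pt⟫ := by
      rw [inner_sub_left, hrep, hrep]
    rw [this]
    calc |⟪f - Pfbar, k pt⟫| ≤ ‖f - Pfbar‖ * ‖k pt‖ := abs_real_inner_le_norm _ _
      _ ≤ (‖f‖ + ‖Pfbar‖) * ‖k pt‖ := by
          gcongr
          exact norm_sub_le _ _
  have h2 : |∑ j, (fbar (x j) - ev f (x j)) * ev (φ j) pt|
      ≤ M * ∑ j, |ev (φ j) pt| := by
    calc |∑ j, (fbar (x j) - ev f (x j)) * ev (φ j) pt|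
        ≤ ∑ j, |(fbar (x j) - ev f (x j)) * ev (φ j) pt| :=
          Finset.abs_sum_le_sum_abs _ _
      _ ≤ ∑ j, M * |ev (φ j) pt| := by
          apply Finset.sum_le_sum
          intro j _
          rw [abs_mul]
          apply mul_le_mul_of_nonneg_right _ (abs_nonneg _)
          rw [abs_sub_comm]
          exact Finset.le_sup' (fun j => |ev f (x j) - fbar (x j)|)
            (Finset.mem_univ j)
      _ = M * ∑ j, |ev (φ j) pt| := by rw [Finset.mul_sum]
  calc |ev f pt - ∑ j, ev f (x j) * ev (φ j) pt|
      ≤ |ev f pt - ev Pfbar pt|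
        + |∑ j, (fbar (x j) - ev f (x j)) * ev (φ j) pt| := by
        rw [hsplit]; exact abs_add_le _ _
    _ ≤ (‖f‖ + ‖Pfbar‖) * ‖k pt‖ + M * ∑ j, |ev (φ j) pt| := add_le_add h1 h2
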